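/- arXiv:0902.2116 — 7 statements merged into one kernel-verified Lean document; each statement's English description precedes it below -/
import Mathlib

section
/- Let B be a ring, Σ a finitely generated projective right B-module with endomorphism ring T = End_B(Σ) and right dual Σ* = Hom_B(Σ, B). If I is a maximal right ideal of B such that IΣ* is a proper right T-submodule of Σ*, then IΣ* is a maximal right T-submodule of Σ*. -/
open MulOpposite

/-- For a ring `B`, a right `B`-module `V` (encoded as a left `Bᵐᵒᵖ`-module) and a
right `B`-module `N`, the group `Hom_B(V, N)` is a right module over the
endomorphism ring `T = End_B(V)` by precomposition. -/
instance dualEndModule {B V N : Type*} [Ring B] [AddCommGroup V] [Module Bᵐᵒᵖ V]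
    [AddCommGroup N] [Module Bᵐᵒᵖ N] :
    Module (Module.End Bᵐᵒᵖ V)ᵐᵒᵖ (V →ₗ[Bᵐᵒᵖ] N) where
  smul t σ := σ ∘ₗ t.unop
  one_smul σ := rfl
  mul_smul t s σ := rfl
  smul_zero t := rfl
  smul_add t σ τ := rfl
  add_smul t s σ := LinearMap.ext fun v => by
    show σ ((t.unop + s.unop) v) = σ (t.unop v) + σ (s.unop v)
    simp
  zero_smul σ := LinearMap.ext fun v => by
    show σ ((0 : Module.End Bᵐᵒᵖ V) v) = 0
    simp

/-- Let `B` be a ring, `V` a finitely generated projective right `B`-module with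
endomorphism ring `T = End_B(V)` and right dual `V* = Hom_B(V, B)`.  If `I` is a
maximal right ideal of `B` such that `IV*` is a proper right `T`-submodule of
`V*`, then `IV*` is a maximal right `T`-submodule of `V*`.  (Here `IV*` is the
`T`-submodule of `V*` consisting of all finite sums of elements `i·σ`,
`i ∈ I`, `σ ∈ V*`, where `(i·σ)(v) = i·σ(v)`.) -/
theorem stmt0 {B V : Type*} [Ring B] [AddCommGroup V] [Module Bᵐᵒᵖ V]
    [Module.Finite Bᵐᵒᵖ V] [Module.Projective Bᵐᵒᵖ V]
    (I : Submodule Bᵐᵒᵖ B) (hI : IsCoatom I)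
    (N : Submodule (Module.End Bᵐᵒᵖ V)ᵐᵒᵖ (V →ₗ[Bᵐᵒᵖ] B))
    (hN : (N : Set (V →ₗ[Bᵐᵒᵖ] B)) =
      {f | ∃ (n : ℕ) (i : Fin n → B) (σ : Fin n → (V →ₗ[Bᵐᵒᵖ] B)),
        (∀ k, i k ∈ I) ∧ ∀ v : V, f v = ∑ k, i k * σ k v})
    (hproper : N ≠ ⊤) :
    IsCoatom N := by
  -- dual basis setup
  obtain ⟨n, π, hπ⟩ := Module.Finite.exists_fin' Bᵐᵒᵖ V
  obtain ⟨s, hs⟩ := Module.projective_lifting_property π (LinearMap.id) hπ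
  -- coordinate functionals
  set σ' : Fin n → (V →ₗ[Bᵐᵒᵖ] B) := fun k =>
    { toFun := fun v => (s v k).unop
      map_add' := fun x y => by simp
      map_smul' := fun c x => by simp [op_smul_eq_mul] } with hσ'
  have key : ∀ f : V →ₗ[Bᵐᵒᵖ] B, f ∈ N ↔ ∀ v, f v ∈ I := by
    intro f
    constructor
    · intro hf v
      have hf' : f ∈ (N : Set _) := hf
      rw [hN] at hf'
      obtain ⟨m, i, σ, hi, hsum⟩ := hf'
      rw [hsum v]
      refine Submodule.sum_mem _ fun k _ => ?_
      have : i k * σ k v = op (σ k v) • i k := rfl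
      rw [this]
      exact Submodule.smul_mem _ _ (hi k)
    · intro hf
      have : f ∈ (N : Set _) := by
        rw [hN]
        refine ⟨n, fun k => f (π (Pi.single k 1)), σ', fun k => hf _, fun v => ?_⟩
        have hv : v = π (s v) := (LinearMap.congr_fun hs v).symm
        have hsv : s v = ∑ k, (s v k) • (Pi.single k (1 : Bᵐᵒᵖ)) := by
          funext j
          simp [Pi.single_apply, Finset.sum_apply, smul_eq_mul, mul_ite]
        calc f v = ∑ k, (s v k) • f (π (Pi.single k 1)) := by
              conv_lhs => rw [hv, hsv]
              simp
          _ = ∑ k, f (π (Pi.single k 1)) * σ' k v :=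
              Finset.sum_congr rfl fun k _ => rfl
      exact this
  constructor
  · exact hproper
  · intro M hM
    obtain ⟨f, hfM, hfN⟩ := SetLike.exists_of_lt hM
    rw [key] at hfN
    push_neg at hfN
    obtain ⟨v₀, hv₀⟩ := hfN
    have htop : I ⊔ Submodule.span Bᵐᵒᵖ {f v₀} = ⊤ := by
      refine hI.2 _ (lt_of_le_of_ne le_sup_left ?_)
      intro h
      exact hv₀ (h ▸ (le_sup_right : Submodule.span Bᵐᵒᵖ {f v₀} ≤ I ⊔ _)
        (Submodule.mem_span_singleton_self _))
    have h1 : (1 : B) ∈ I ⊔ Submodule.span Bᵐᵒᵖ {f v₀} := htop ▸ Submodule.mem_top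
    rw [Submodule.mem_sup] at h1
    obtain ⟨y, hy, z, hz, hyz⟩ := h1
    rw [Submodule.mem_span_singleton] at hz
    obtain ⟨c, hc⟩ := hz
    rw [eq_top_iff]
    intro σ _
    set b := c.unop with hb
    set t : V →ₗ[Bᵐᵒᵖ] V :=
      { toFun := fun w => (op (b * σ w)) • v₀
        map_add' := fun x y => by simp [mul_add, add_smul]
        map_smul' := fun d x => by
          simp only [map_smul, RingHom.id_apply]
          rw [smul_smul]
          congr 1
          have hd : d • σ x = σ x * d.unop := by
            rw [← op_unop d, op_smul_eq_mul, unop_op]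
          rw [hd, ← op_unop d, ← op_mul, mul_assoc, unop_op] } with ht
    have hmem : op t • f ∈ M := M.smul_mem _ hfM
    have hdiff : σ - op t • f ∈ N := by
      rw [key]
      intro w
      have heq : (σ - op t • f) w = y * σ w := by
        show σ w - f (t w) = y * σ w
        have h2 : f (t w) = (f v₀ * b) * σ w := by
          show f ((op (b * σ w)) • v₀) = (f v₀ * b) * σ w
          rw [map_smul, op_smul_eq_mul, mul_assoc]
        have hz' : z = f v₀ * b := by rw [← hc]; rfl
        rw [h2, ← hz', eq_sub_of_add_eq hyz, sub_mul, one_mul]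
      rw [heq]
      exact Submodule.smul_mem I (op (σ w)) hy
    have hσ : σ = (σ - op t • f) + op t • f := (sub_add_cancel σ _).symm
    rw [hσ]
    exact M.add_mem (hM.le hdiff) hmem
end

section
/- Let B be a ring, Σ a finitely generated projective right B-module with endomorphism ring T, dual Σ*, and let I be a maximal right ideal of B. If Hom_B(Σ, B/I) ≠ 0, then the right T-module (B/I) ⊗_B Σ* ≅ Σ*/IΣ* is a simple right T-module. -/
open MulOpposite

/-- The `Bᵐᵒᵖ`-linear map `B → V`, `b ↦ op b • x`. -/
def toSpanAux {B V : Type*} [Ring B] [AddCommGroup V] [Module Bᵐᵒᵖ V] (x : V) :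
    B →ₗ[Bᵐᵒᵖ] V where
  toFun b := op b • x
  map_add' b c := by show op (b + c) • x = op b • x + op c • x; rw [op_add, add_smul]
  map_smul' a b := by
    show op (b * a.unop) • x = a • op b • x
    rw [op_mul, mul_smul, op_unop]

/-- Let `B` be a ring, `V` a finitely generated projective right `B`-module with
endomorphism ring `T = End_B(V)`, dual `V* = Hom_B(V,B)`, and let `I` be a
maximal right ideal of `B`.  If `Hom_B(V, B/I) ≠ 0`, then the right `T`-module
`(B/I) ⊗_B V* ≅ V*/IV*` is a simple right `T`-module. -/
theorem stmt1 {B V : Type*} [Ring B] [AddCommGroup V] [Module Bᵐᵒᵖ V]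
    [Module.Finite Bᵐᵒᵖ V] [Module.Projective Bᵐᵒᵖ V]
    (I : Submodule Bᵐᵒᵖ B) (hI : IsCoatom I)
    (N : Submodule (Module.End Bᵐᵒᵖ V)ᵐᵒᵖ (V →ₗ[Bᵐᵒᵖ] B))
    (hN : (N : Set (V →ₗ[Bᵐᵒᵖ] B)) =
      {f | ∃ (n : ℕ) (i : Fin n → B) (σ : Fin n → (V →ₗ[Bᵐᵒᵖ] B)),
        (∀ k, i k ∈ I) ∧ ∀ v : V, f v = ∑ k, i k * σ k v})
    (hhom : ∃ f : V →ₗ[Bᵐᵒᵖ] (B ⧸ I), f ≠ 0) :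
    IsSimpleModule (Module.End Bᵐᵒᵖ V)ᵐᵒᵖ ((V →ₗ[Bᵐᵒᵖ] B) ⧸ N) := by
  classical
  have hmem : ∀ f : V →ₗ[Bᵐᵒᵖ] B, f ∈ N ↔
      ∃ (n : ℕ) (i : Fin n → B) (σ : Fin n → (V →ₗ[Bᵐᵒᵖ] B)),
        (∀ k, i k ∈ I) ∧ ∀ v : V, f v = ∑ k, i k * σ k v := by
    intro f
    rw [← SetLike.mem_coe, hN]
    rfl
  -- elements of N map into I
  have hNI : ∀ f ∈ N, ∀ v : V, f v ∈ I := by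
    intro f hf v
    obtain ⟨m, i, σ, hi, hfv⟩ := (hmem f).1 hf
    rw [hfv v]
    exact Submodule.sum_mem _ fun k _ => by
      have := I.smul_mem (op (σ k v)) (hi k)
      rwa [op_smul_eq_mul] at this
  -- dual basis for V
  obtain ⟨n, x, hx⟩ := Module.Finite.exists_fin (R := Bᵐᵒᵖ) (M := V)
  set π : (Fin n → B) →ₗ[Bᵐᵒᵖ] V :=
    LinearMap.lsum Bᵐᵒᵖ (fun _ : Fin n => B) ℕ (fun j => toSpanAux (x j)) with hπ
  have hπ_apply : ∀ c : Fin n → B, π c = ∑ j, op (c j) • x j := by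
    intro c
    simp [hπ, LinearMap.lsum_apply, toSpanAux]
  have hπ_surj : Function.Surjective π := by
    rw [← LinearMap.range_eq_top, eq_top_iff, ← hx, Submodule.span_le]
    rintro v ⟨j, rfl⟩
    refine ⟨Pi.single j 1, ?_⟩
    rw [hπ_apply]
    rw [Finset.sum_eq_single j]
    · simp
    · intro k _ hk; simp [Pi.single_apply, hk]
    · simp
  obtain ⟨s, hs⟩ := Module.projective_lifting_property π LinearMap.id hπ_surj
  set σ : Fin n → (V →ₗ[Bᵐᵒᵖ] B) := fun j => LinearMap.proj j ∘ₗ s with hσ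
  have hrepr : ∀ v : V, ∑ j, op (σ j v) • x j = v := by
    intro v
    have := congrArg (fun g : V →ₗ[Bᵐᵒᵖ] V => g v) hs
    simp only [LinearMap.comp_apply, LinearMap.id_apply] at this
    conv_rhs => rw [← this, hπ_apply]
    rfl
  -- a map landing in I lies in N
  have hIN : ∀ τ : V →ₗ[Bᵐᵒᵖ] B, (∀ v : V, τ v ∈ I) → τ ∈ N := by
    intro τ hτ
    refine (hmem τ).2 ⟨n, fun j => τ (x j), σ, fun j => hτ _, fun v => ?_⟩
    conv_lhs => rw [← hrepr v]
    rw [map_sum]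
    refine Finset.sum_congr rfl fun j _ => ?_
    rw [map_smul, op_smul_eq_mul]
  rw [isSimpleModule_iff_isCoatom]
  constructor
  · -- N ≠ ⊤
    obtain ⟨f, hf⟩ := hhom
    obtain ⟨g, hg⟩ := Module.projective_lifting_property I.mkQ f
      (Submodule.mkQ_surjective I)
    intro hNtop
    apply hf
    ext v
    have : g v ∈ I := hNI g (hNtop ▸ Submodule.mem_top) v
    have := congrArg (fun h : V →ₗ[Bᵐᵒᵖ] B ⧸ I => h v) hg
    simp only [LinearMap.comp_apply, Submodule.mkQ_apply] at this
    rw [← this]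
    simpa [Submodule.Quotient.mk_eq_zero] using ‹g v ∈ I›
  · -- every strictly larger submodule is ⊤
    intro P hNP
    obtain ⟨τ, hτP, hτN⟩ := SetLike.exists_of_lt hNP
    have : ∃ v₀ : V, τ v₀ ∉ I := by
      by_contra h
      push_neg at h
      exact hτN (hIN τ h)
    obtain ⟨v₀, hv₀⟩ := this
    have hsup : I ⊔ Submodule.span Bᵐᵒᵖ {τ v₀} = ⊤ := by
      refine hI.2 _ (lt_of_le_of_ne le_sup_left fun h => hv₀ ?_)
      rw [h]
      exact Submodule.mem_sup_right (Submodule.mem_span_singleton_self _)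
    have h1 : (1 : B) ∈ I ⊔ Submodule.span Bᵐᵒᵖ {τ v₀} := hsup ▸ Submodule.mem_top
    obtain ⟨i, hiI, y, hy, hiy⟩ := Submodule.mem_sup.1 h1
    obtain ⟨a, rfl⟩ := Submodule.mem_span_singleton.1 hy
    rw [eq_top_iff]
    intro ρ _
    -- the endomorphism t : v ↦ (op (ρ v) * a) • v₀
    set t : V →ₗ[Bᵐᵒᵖ] V :=
      { toFun := fun v => (op (ρ v) * a) • v₀
        map_add' := fun v w => by
          show (op (ρ (v + w)) * a) • v₀ = (op (ρ v) * a) • v₀ + (op (ρ w) * a) • v₀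
          rw [map_add, op_add, add_mul, add_smul]
        map_smul' := fun c v => by
          show (op (ρ (c • v)) * a) • v₀ = c • (op (ρ v) * a) • v₀
          rw [map_smul]
          show (op (ρ v * c.unop) * a) • v₀ = _
          rw [op_mul, op_unop, mul_assoc, mul_smul] } with ht
    have hτt : ∀ v : V, τ (t v) = ρ v - i * ρ v := by
      intro v
      show τ ((op (ρ v) * a) • v₀) = _
      rw [map_smul, mul_smul, op_smul_eq_mul]
      have : a • τ v₀ = 1 - i := by rw [← hiy]; abel
      rw [this, sub_mul, one_mul]
    have hdiff : ρ - (op t • τ) ∈ N := by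
      refine (hmem _).2 ⟨1, fun _ => i, fun _ => ρ, fun _ => hiI, fun v => ?_⟩
      have : (op t • τ) v = τ (t v) := rfl
      rw [LinearMap.sub_apply, this, hτt v, Fin.sum_univ_one]
      abel
    have : ρ = (op t • τ) + (ρ - (op t • τ)) := by abel
    rw [this]
    exact P.add_mem (P.smul_mem _ hτP) (le_of_lt hNP hdiff)
end

section
/- Let B be a ring, Σ a finitely generated projective right B-module, and S a simple right B-module with Hom_B(Σ, S) ≠ 0. Then Hom_B(Σ, S) is a simple right module over the endomorphism ring T = End_B(Σ). -/
open MulOpposite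

/-- Let `B` be a ring, `V` a finitely generated projective right `B`-module, and
`S` a simple right `B`-module with `Hom_B(V, S) ≠ 0`.  Then `Hom_B(V, S)` is a
simple right module over the endomorphism ring `T = End_B(V)` (acting by
precomposition). -/
theorem stmt2 {B V S : Type*} [Ring B] [AddCommGroup V] [Module Bᵐᵒᵖ V]
    [Module.Finite Bᵐᵒᵖ V] [Module.Projective Bᵐᵒᵖ V]
    [AddCommGroup S] [Module Bᵐᵒᵖ S] [IsSimpleModule Bᵐᵒᵖ S]
    (hhom : ∃ f : V →ₗ[Bᵐᵒᵖ] S, f ≠ 0) :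
    IsSimpleModule (Module.End Bᵐᵒᵖ V)ᵐᵒᵖ (V →ₗ[Bᵐᵒᵖ] S) := by
  obtain ⟨f, hf⟩ := hhom
  have hsurj : ∀ g : V →ₗ[Bᵐᵒᵖ] S, g ≠ 0 → Function.Surjective g := by
    intro g hg
    rcases eq_bot_or_eq_top (LinearMap.range g) with h | h
    · exact absurd (LinearMap.range_eq_bot.mp h) hg
    · exact LinearMap.range_eq_top.mp h
  have : Nontrivial (V →ₗ[Bᵐᵒᵖ] S) := ⟨f, 0, hf⟩
  refine (isSimpleModule_iff _ _).mpr { eq_bot_or_eq_top := ?_ }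
  intro m
  rcases eq_or_ne m ⊥ with hm | hm
  · exact Or.inl hm
  · refine Or.inr (Submodule.eq_top_iff'.mpr fun h => ?_)
    obtain ⟨g, hgm, hg⟩ := Submodule.exists_mem_ne_zero_of_ne_bot hm
    obtain ⟨t, ht⟩ := Module.projective_lifting_property g h (hsurj g hg)
    have : h = op t • g := ht.symm
    rw [this]
    exact m.smul_mem (op t) hgm
end

section
/- Let G be a group, A a G-graded ring, 𝒞 = AG, and B = Ã ⊕ (⊕_x e_x Ã) the smash product ring. The A-balanced bilinear form ⟨-,-⟩ : 𝒞 × B → A determined by ⟨x, e_y⟩ = δ_{x,y} and ⟨x, ã⟩ = a satisfies c = Σ_{z∈G} ⟨c, e_z⟩ z (finite sum) for every c ∈ 𝒞, and the induced map α_M : M ⊗_A 𝒞 → Hom_A(B, M) is injective for every right A-module M. -/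
open MulOpposite

variable {G : Type*} [Group G] [DecidableEq G] {A : Type*} [Ring A]


/-- Right action of `a ∈ A` on the basis element `y` of `𝒞 = AG ≅ G →₀ A`. -/
noncomputable def ractSingle (𝒜 : G → AddSubgroup A) [DirectSum.Decomposition 𝒜]
    (y : G) (a : A) : G →₀ A :=
  DirectSum.toAddMonoid
    (fun z => (Finsupp.singleAddHom (y * z)).comp (𝒜 z).subtype)
    (DirectSum.decompose 𝒜 a)

/-- The left `A`-linear endomorphism `ã : c ↦ c·a` of `𝒞 = AG` (right
multiplication by `a`). -/
noncomputable def rmulHom (𝒜 : G → AddSubgroup A) [DirectSum.Decomposition 𝒜]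
    (a : A) : (G →₀ A) →ₗ[A] (G →₀ A) :=
  Finsupp.lsum ℕ fun y => LinearMap.toSpanSingleton A _ (ractSingle 𝒜 y a)

/-- The projection `e_x` of `𝒞 = AG` onto the direct summand `Ax`. -/
noncomputable def projHom (A : Type*) [Ring A] (x : G) : (G →₀ A) →ₗ[A] (G →₀ A) :=
  Finsupp.lsingle x ∘ₗ Finsupp.lapply x

/-- `ã` as an element of the opposite of the endomorphism ring of `𝒞` (the
left-colinear endomorphism ring has multiplication opposite to composition). -/
noncomputable def atilde (𝒜 : G → AddSubgroup A) [DirectSum.Decomposition 𝒜]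
    (a : A) : (Module.End A (G →₀ A))ᵐᵒᵖ :=
  op (rmulHom 𝒜 a)

/-- `e_x` as an element of the opposite of the endomorphism ring of `𝒞`. -/
noncomputable def eIdem (A : Type*) [Ring A] (x : G) : (Module.End A (G →₀ A))ᵐᵒᵖ :=
  op (projHom A x)

/-- The smash product ring `B`: the subring of the (left-colinear) endomorphism
ring of `𝒞 = AG` generated by `Ã` and the orthogonal idempotents `{e_x}`. -/
noncomputable def smashB (𝒜 : G → AddSubgroup A) [DirectSum.Decomposition 𝒜] :
    Subring (Module.End A (G →₀ A))ᵐᵒᵖ :=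
  Subring.closure (Set.range (atilde 𝒜) ∪ Set.range (eIdem A (G := G)))

/-- The `A`-balanced bilinear form `⟨-,-⟩ : 𝒞 × B → A`, `⟨c, f⟩ = ε(f(c))`. -/
noncomputable def cbPairing (c : G →₀ A) (b : (Module.End A (G →₀ A))ᵐᵒᵖ) : A :=
  ((unop b) c).sum fun _ v => v

omit [Group G] [DecidableEq G] in
/-- The "sum of coefficients" additive map. -/
lemma epsHom_single' (g : G) (a : A) :
    Finsupp.liftAddHom (fun _ : G => AddMonoidHom.id A) (Finsupp.single g a) = a := by
  simp

omit [Group G] [DecidableEq G] in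
lemma cbPairing_eIdem (c : G →₀ A) (z : G) : cbPairing c (eIdem A z) = c z := by
  have : cbPairing c (eIdem A z) = (Finsupp.single z (c z)).sum fun _ v => v := rfl
  rw [this, Finsupp.sum_single_index rfl]

/-- Let `G` be a group, `A` a `G`-graded ring, `𝒞 = AG`, and
`B = Ã ⊕ (⊕_x e_x Ã)` the smash product ring.  The `A`-balanced bilinear form
`⟨-,-⟩ : 𝒞 × B → A` determined by `⟨x, e_y⟩ = δ_{x,y}` and `⟨x, ã⟩ = a`
satisfies `c = Σ_{z∈G} ⟨c, e_z⟩ z` (finite sum) for every `c ∈ 𝒞`, and the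
induced map `α_M : M ⊗_A 𝒞 → Hom_A(B, M)`, `α_M(m ⊗ c)(b) = m⟨c, b⟩`, is
injective for every right `A`-module `M` (with `M ⊗_A 𝒞` identified with
`G →₀ M` since `𝒞` is free as a left `A`-module). -/
theorem stmt14 (𝒜 : G → AddSubgroup A) [DirectSum.Decomposition 𝒜]
    (hone : (1 : A) ∈ 𝒜 1)
    (hmul : ∀ {x y : G} {a b : A}, a ∈ 𝒜 x → b ∈ 𝒜 y → a * b ∈ 𝒜 (x * y))
    {M : Type*} [AddCommGroup M] [Module Aᵐᵒᵖ M] :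
    -- the defining values of the bilinear form
    (∀ x y : G, cbPairing (Finsupp.single x (1:A)) (eIdem A y) =
      if x = y then 1 else 0) ∧
    (∀ (x : G) (a : A), cbPairing (Finsupp.single x (1:A)) (atilde 𝒜 a) = a) ∧
    -- `c = Σ_z ⟨c, e_z⟩ z` for every `c ∈ 𝒞`
    (∀ c : G →₀ A,
      c = c.sum fun z _ => Finsupp.single z (cbPairing c (eIdem A z))) ∧
    -- injectivity of `α_M` on `B = smashB 𝒜`
    (∀ u : G →₀ M,
      (∀ b ∈ smashB 𝒜,
        (u.sum fun x m => op (cbPairing (Finsupp.single x (1:A)) b) • m) = 0) →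
      u = 0) := by
  refine ⟨?_, ?_, ?_, ?_⟩
  · intro x y
    rw [cbPairing_eIdem, Finsupp.single_apply]
  · intro x a
    have h1 : (unop (atilde 𝒜 a)) (Finsupp.single x 1) = ractSingle 𝒜 x a := by
      simp [atilde, rmulHom, LinearMap.toSpanSingleton]
    set ε : (G →₀ A) →+ A := Finsupp.liftAddHom fun _ : G => AddMonoidHom.id A with hε
    have h2 : cbPairing (Finsupp.single x 1) (atilde 𝒜 a)
        = ε (ractSingle 𝒜 x a) := by
      rw [cbPairing, h1]; rfl
    rw [h2, ractSingle, ← AddMonoidHom.comp_apply]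
    have h3 : ε.comp (DirectSum.toAddMonoid
        (fun z => (Finsupp.singleAddHom (x * z)).comp (𝒜 z).subtype))
        = DirectSum.coeAddMonoidHom 𝒜 := by
      ext z v
      simp [hε, DirectSum.coeAddMonoidHom_of]
    rw [h3]
    exact DirectSum.Decomposition.left_inv a
  · intro c
    conv_lhs => rw [← Finsupp.sum_single c]
    exact Finsupp.sum_congr fun z hz => by rw [cbPairing_eIdem]
  · intro u hu
    ext x
    have hmem : eIdem A x ∈ smashB 𝒜 :=
      Subring.subset_closure (Or.inr ⟨x, rfl⟩)
    have := hu (eIdem A x) hmem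
    have heq : (u.sum fun y m =>
        op (cbPairing (Finsupp.single y (1:A)) (eIdem A x)) • m)
        = u.sum fun y m => if y = x then m else 0 := by
      refine Finsupp.sum_congr fun y _ => ?_
      rw [cbPairing_eIdem, Finsupp.single_apply]
      split_ifs with h <;> simp [h]
    rw [heq] at this
    rw [Finsupp.sum_ite_eq' u x (fun _ m => m)] at this
    simpa using this
end

section
/- Let G be a group with neutral element e, A a G-graded ring, and S a simple G-graded right A-module (S ≠ 0 with no nonzero proper graded submodules). If x ∈ G with S_x ≠ 0, then S_x is a simple right A_e-module. -/
open MulOpposite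

/-- Let `G` be a group with neutral element `e`, `A` a `G`-graded ring, and `S`
a simple `G`-graded right `A`-module (nonzero, with no nonzero proper graded
submodules).  If `x ∈ G` with `S_x ≠ 0`, then `S_x` is a simple right
`A_e`-module: every `A_e`-stable additive subgroup `T ≤ S_x` is `⊥` or `S_x`.

Right `A`-modules are encoded as left `Aᵐᵒᵖ`-modules; a graded submodule is a
submodule containing all homogeneous components of its elements. -/
theorem stmt17 {G : Type*} [Group G] [DecidableEq G] {A : Type*} [Ring A]
    (𝒜 : G → AddSubgroup A) [DirectSum.Decomposition 𝒜]
    (hone : (1 : A) ∈ 𝒜 1)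
    (hmul : ∀ {x y : G} {a b : A}, a ∈ 𝒜 x → b ∈ 𝒜 y → a * b ∈ 𝒜 (x * y))
    {S : Type*} [AddCommGroup S] [Module Aᵐᵒᵖ S]
    (𝒮 : G → AddSubgroup S) [DirectSum.Decomposition 𝒮]
    (hcompat : ∀ (x y : G) (s : S) (a : A), s ∈ 𝒮 x → a ∈ 𝒜 y →
      op a • s ∈ 𝒮 (x * y))
    (hnz : ∃ s : S, s ≠ 0)
    (hsimple : ∀ N : Submodule Aᵐᵒᵖ S,
      (∀ s ∈ N, ∀ x : G, (DirectSum.decompose 𝒮 s x : S) ∈ N) → N = ⊥ ∨ N = ⊤)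
    (x : G) (hx : 𝒮 x ≠ ⊥) :
    ∀ T : AddSubgroup S, T ≤ 𝒮 x →
      (∀ s ∈ T, ∀ a ∈ 𝒜 1, op a • s ∈ T) →
      T = ⊥ ∨ T = 𝒮 x := by
  intro T hTle hTstab
  by_cases hT : T = ⊥
  · exact Or.inl hT
  right
  obtain ⟨t, htT, ht0⟩ : ∃ t ∈ T, t ≠ 0 := by
    by_contra h
    push_neg at h
    exact hT (by ext s; simp only [AddSubgroup.mem_bot]; exact ⟨fun hs => h s hs, fun hs => hs ▸ T.zero_mem⟩)
  have ht : t ∈ 𝒮 x := hTle htT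
  -- key computation: the degree-`x'` component of `op a • t` is `op a_{x⁻¹x'} • t`
  have key : ∀ (a : A) (x' : G), (DirectSum.decompose 𝒮 (op a • t) x' : S)
      = op ((DirectSum.decompose 𝒜 a (x⁻¹ * x') : A)) • t := by
    intro a x'
    classical
    conv_lhs => rw [← DirectSum.sum_support_decompose 𝒜 a]
    rw [show (op (∑ i ∈ (DirectSum.decompose 𝒜 a).support, (DirectSum.decompose 𝒜 a i : A)) : Aᵐᵒᵖ)
        = ∑ i ∈ (DirectSum.decompose 𝒜 a).support, op (DirectSum.decompose 𝒜 a i : A) from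
        map_sum (opAddEquiv : A ≃+ Aᵐᵒᵖ) _ _, Finset.sum_smul, DirectSum.decompose_sum,
        DFinsupp.finset_sum_apply, AddSubmonoidClass.coe_finset_sum]
    have : ∀ i ∈ (DirectSum.decompose 𝒜 a).support,
        (DirectSum.decompose 𝒮 (op (DirectSum.decompose 𝒜 a i : A) • t) x' : S)
        = if i = x⁻¹ * x' then op (DirectSum.decompose 𝒜 a i : A) • t else 0 := by
      intro i _
      have hmem := hcompat x i t _ ht (SetLike.coe_mem (DirectSum.decompose 𝒜 a i))
      by_cases h : i = x⁻¹ * x'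
      · subst h
        rw [if_pos rfl, DirectSum.decompose_of_mem_same 𝒮 (by simpa using hmem)]
      · rw [if_neg h, DirectSum.decompose_of_mem_ne 𝒮 hmem]
        intro hc
        exact h (by rw [← hc]; group)
    rw [Finset.sum_congr rfl this, Finset.sum_ite_eq']
    by_cases hj : x⁻¹ * x' ∈ (DirectSum.decompose 𝒜 a).support
    · rw [if_pos hj]
    · rw [if_neg hj]
      rw [DFinsupp.notMem_support_iff] at hj
      rw [hj]
      simp
  -- the cyclic submodule generated by `t` is graded, hence `⊤`
  set N : Submodule Aᵐᵒᵖ S := Submodule.span Aᵐᵒᵖ {t} with hN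
  have hNgraded : ∀ s ∈ N, ∀ x' : G, (DirectSum.decompose 𝒮 s x' : S) ∈ N := by
    intro s hs x'
    rw [hN, Submodule.mem_span_singleton] at hs
    obtain ⟨a, rfl⟩ := hs
    rw [show a • t = op a.unop • t by rw [op_unop], key]
    exact Submodule.mem_span_singleton.mpr ⟨_, rfl⟩
  have hNtop : N = ⊤ := by
    rcases hsimple N hNgraded with h | h
    · have htN : t ∈ N := Submodule.mem_span_singleton_self t
      rw [h, Submodule.mem_bot] at htN
      exact absurd htN ht0
    · exact h
  -- every element of `𝒮 x` lies in `T`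
  refine le_antisymm hTle fun s hs => ?_
  have hsN : s ∈ N := hNtop ▸ Submodule.mem_top
  rw [hN, Submodule.mem_span_singleton] at hsN
  obtain ⟨a, rfl⟩ := hsN
  have := key a.unop x
  rw [op_unop, DirectSum.decompose_of_mem_same 𝒮 hs] at this
  rw [this]
  exact hTstab t htT _ (by simpa using SetLike.coe_mem (DirectSum.decompose 𝒜 a.unop (x⁻¹ * x)))
end

section
/- Let G be a group with neutral element e and A a G-graded ring. Every simple G-graded right A-module S is, as a right A_e-module, semisimple; indeed S = ⊕_{x∈G} S_x and each nonzero homogeneous component S_x is a simple right A_e-module. -/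
open MulOpposite

/-- Let `G` be a group with neutral element `e` and `A` a `G`-graded ring.
Every simple `G`-graded right `A`-module `S` is, as a right `A_e`-module,
semisimple: indeed `S = ⊕_{x∈G} S_x` (the decomposition is internal and
direct), and each nonzero homogeneous component `S_x` is a simple right
`A_e`-module (every `A_e`-stable additive subgroup `T ≤ S_x` is `⊥` or `S_x`). -/
theorem stmt18 {G : Type*} [Group G] [DecidableEq G] {A : Type*} [Ring A]
    (𝒜 : G → AddSubgroup A) [DirectSum.Decomposition 𝒜]
    (hone : (1 : A) ∈ 𝒜 1)
    (hmul : ∀ {x y : G} {a b : A}, a ∈ 𝒜 x → b ∈ 𝒜 y → a * b ∈ 𝒜 (x * y))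
    {S : Type*} [AddCommGroup S] [Module Aᵐᵒᵖ S]
    (𝒮 : G → AddSubgroup S) [DirectSum.Decomposition 𝒮]
    (hcompat : ∀ (x y : G) (s : S) (a : A), s ∈ 𝒮 x → a ∈ 𝒜 y →
      op a • s ∈ 𝒮 (x * y))
    (hnz : ∃ s : S, s ≠ 0)
    (hsimple : ∀ N : Submodule Aᵐᵒᵖ S,
      (∀ s ∈ N, ∀ x : G, (DirectSum.decompose 𝒮 s x : S) ∈ N) → N = ⊥ ∨ N = ⊤) :
    DirectSum.IsInternal 𝒮 ∧
    ∀ x : G, 𝒮 x ≠ ⊥ →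
      ∀ T : AddSubgroup S, T ≤ 𝒮 x →
        (∀ s ∈ T, ∀ a ∈ 𝒜 1, op a • s ∈ T) →
        T = ⊥ ∨ T = 𝒮 x := by
  classical
  refine ⟨DirectSum.Decomposition.isInternal 𝒮, ?_⟩
  intro x hx T hTle hTstable
  by_cases hT : T = ⊥
  · exact Or.inl hT
  right
  -- Q z : degree-z part of the A-submodule generated by T
  set Q : G → AddSubgroup S := fun z =>
    AddSubgroup.closure {s | ∃ a ∈ 𝒜 (x⁻¹ * z), ∃ t ∈ T, s = op a • t} with hQ
  -- Q z ≤ 𝒮 z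
  have hQS : ∀ z, Q z ≤ 𝒮 z := by
    intro z
    rw [hQ]
    refine AddSubgroup.closure_le _ |>.2 ?_
    rintro s ⟨a, ha, t, ht, rfl⟩
    have := hcompat x (x⁻¹ * z) t a (hTle ht) ha
    rwa [mul_inv_cancel_left] at this
  -- key stability of Q under homogeneous scalars
  have hkey : ∀ (z y : G) (s : S), s ∈ Q z → ∀ a ∈ 𝒜 y, op a • s ∈ Q (z * y) := by
    intro z y s hs a ha
    induction hs using AddSubgroup.closure_induction with
    | mem s hsm =>
      obtain ⟨b, hb, t, ht, rfl⟩ := hsm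
      have : op a • op b • t = op (b * a) • t := by
        rw [smul_smul, ← op_mul]
      rw [this]
      refine AddSubgroup.subset_closure ⟨b * a, ?_, t, ht, rfl⟩
      have := hmul hb ha
      rwa [show x⁻¹ * z * y = x⁻¹ * (z * y) by group] at this
    | zero => simpa using (Q (z * y)).zero_mem
    | add s₁ s₂ _ _ h1 h2 => rw [smul_add]; exact (Q (z * y)).add_mem h1 h2
    | neg s₁ _ h1 => rw [smul_neg]; exact (Q (z * y)).neg_mem h1
  -- Q x ≤ T
  have hQxT : Q x ≤ T := by
    rw [hQ]
    refine AddSubgroup.closure_le _ |>.2 ?_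
    rintro s ⟨a, ha, t, ht, rfl⟩
    rw [inv_mul_cancel] at ha
    exact hTstable t ht a ha
  -- the evaluation map s ↦ (decompose 𝒮 s w : S) as an AddMonoidHom
  let F : G → (S →+ S) := fun w =>
    ((𝒮 w).subtype.comp (DFinsupp.evalAddMonoidHom w)).comp
      (DirectSum.decomposeAddEquiv 𝒮).toAddMonoidHom
  have hF : ∀ (w : G) (s : S), F w s = (DirectSum.decompose 𝒮 s w : S) := fun _ _ => rfl
  -- the A-submodule N generated by T, defined via its graded pieces
  set N : Submodule Aᵐᵒᵖ S :=
    { carrier := {s | ∀ z, (DirectSum.decompose 𝒮 s z : S) ∈ Q z}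
      zero_mem' := by
        intro z
        simp only [DirectSum.decompose_zero, DirectSum.zero_apply,
          ZeroMemClass.coe_zero]
        exact (Q z).zero_mem
      add_mem' := by
        intro s₁ s₂ h1 h2 z
        rw [DirectSum.decompose_add, DirectSum.add_apply, AddSubgroup.coe_add]
        exact (Q z).add_mem (h1 z) (h2 z)
      smul_mem' := by
        intro c s hs w
        have hc : c • s = ∑ z ∈ (DirectSum.decompose 𝒮 s).support,
            ∑ y ∈ (DirectSum.decompose 𝒜 c.unop).support,
              op (DirectSum.decompose 𝒜 c.unop y : A) •
                (DirectSum.decompose 𝒮 s z : S) := by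
          conv_lhs => rw [← DirectSum.sum_support_decompose 𝒮 s]
          rw [Finset.smul_sum]
          refine Finset.sum_congr rfl fun z _ => ?_
          conv_lhs => rw [show c = op c.unop from rfl,
            ← DirectSum.sum_support_decompose 𝒜 c.unop]
          rw [Finset.op_sum, Finset.sum_smul]
        rw [← hF, hc, map_sum]
        refine (Q w).sum_mem fun z _ => ?_
        rw [map_sum]
        refine (Q w).sum_mem fun y _ => ?_
        rw [hF]
        have hmem : op (DirectSum.decompose 𝒜 c.unop y : A) •
            (DirectSum.decompose 𝒮 s z : S) ∈ 𝒮 (z * y) :=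
          hcompat z y _ _ (SetLike.coe_mem _) (SetLike.coe_mem _)
        by_cases hzy : z * y = w
        · subst hzy
          rw [DirectSum.decompose_of_mem_same 𝒮 hmem]
          exact hkey z y _ (hs z) _ (SetLike.coe_mem _)
        · rw [DirectSum.decompose_of_mem_ne 𝒮 hmem hzy]
          exact (Q w).zero_mem } with hN
  -- N is stable under taking homogeneous components
  have hNhom : ∀ s ∈ N, ∀ z : G, (DirectSum.decompose 𝒮 s z : S) ∈ N := by
    intro s hs z w
    by_cases hzw : z = w
    · subst hzw
      rw [DirectSum.decompose_of_mem_same 𝒮 (SetLike.coe_mem _)]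
      exact hs z
    · rw [DirectSum.decompose_of_mem_ne 𝒮 (SetLike.coe_mem _) hzw]
      exact (Q w).zero_mem
  -- T ⊆ N
  have hTN : ∀ t ∈ T, t ∈ N := by
    intro t ht z
    by_cases hzx : x = z
    · subst hzx
      rw [DirectSum.decompose_of_mem_same 𝒮 (hTle ht)]
      refine AddSubgroup.subset_closure ⟨1, by rwa [inv_mul_cancel], t, ht, ?_⟩
      rw [op_one, one_smul]
    · rw [DirectSum.decompose_of_mem_ne 𝒮 (hTle ht) hzx]
      exact (Q z).zero_mem
  -- N ≠ ⊥, hence N = ⊤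
  obtain ⟨t, ht, htnz⟩ : ∃ t ∈ T, t ≠ 0 := by
    by_contra h
    push_neg at h
    exact hT ((AddSubgroup.eq_bot_iff_forall T).mpr h)
  have hNtop : N = ⊤ := by
    rcases hsimple N hNhom with h | h
    · exact absurd ((Submodule.mem_bot _).mp (h ▸ hTN t ht)) htnz
    · exact h
  -- conclude T = 𝒮 x
  refine le_antisymm hTle fun s hs => ?_
  have hsN : s ∈ N := hNtop ▸ Submodule.mem_top
  have := hQxT (hsN x)
  rwa [DirectSum.decompose_of_mem_same 𝒮 hs] at this
end

section
/- Let G be a group with neutral element e, A a G-graded ring, x ∈ G, and let S, S' be simple G-graded right A-modules with S_x ≠ 0 and S'_x ≠ 0. Then S ≅ S' as graded modules if and only if S_x ≅ S'_x as right A_e-modules. -/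
open MulOpposite

/-- The `y`-component map of a graded module, as an additive monoid hom. -/
private def dAux {G M : Type*} [DecidableEq G] [AddCommGroup M]
    (ℳ : G → AddSubgroup M) [DirectSum.Decomposition ℳ] (y : G) : M →+ M :=
  AddMonoidHom.mk' (fun m => (DirectSum.decompose ℳ m y : M)) (by
    intro a b
    simp [DirectSum.decompose_add])

private lemma dAux_apply {G M : Type*} [DecidableEq G] [AddCommGroup M]
    (ℳ : G → AddSubgroup M) [DirectSum.Decomposition ℳ] (y : G) (m : M) :
    dAux ℳ y m = (DirectSum.decompose ℳ m y : M) := rfl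

private lemma aux_decompose_smul {G : Type*} [Group G] [DecidableEq G] {A : Type*} [Ring A]
    (𝒜 : G → AddSubgroup A) [DirectSum.Decomposition 𝒜]
    {M : Type*} [AddCommGroup M] [Module Aᵐᵒᵖ M]
    (ℳ : G → AddSubgroup M) [DirectSum.Decomposition ℳ]
    (hc : ∀ (y z : G) (m : M) (a : A), m ∈ ℳ y → a ∈ 𝒜 z → op a • m ∈ ℳ (y * z))
    {x : G} {s : M} (hs : s ∈ ℳ x) (a : A) (y : G) :
    dAux ℳ y (op a • s) = op ((DirectSum.decompose 𝒜 a (x⁻¹ * y) : A)) • s := by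
  refine DirectSum.Decomposition.inductionOn 𝒜
    (motive := fun a => dAux ℳ y (op a • s)
      = op ((DirectSum.decompose 𝒜 a (x⁻¹ * y) : A)) • s) ?_ ?_ ?_ a
  · simp [dAux_apply]
  · rintro z ⟨b, hb⟩
    by_cases h : y = x * z
    · subst h
      rw [dAux_apply, DirectSum.decompose_of_mem_same ℳ (hc x z s b hs hb),
        show x⁻¹ * (x * z) = z by group, DirectSum.decompose_of_mem_same 𝒜 hb]
    · rw [dAux_apply, DirectSum.decompose_of_mem_ne ℳ (hc x z s b hs hb) (Ne.symm h),
        DirectSum.decompose_of_mem_ne 𝒜 hb (fun hzy => h (by rw [hzy, mul_inv_cancel_left]))]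
      simp
  · intro m m' hm hm'
    rw [show op (m + m') • s = op m • s + op m' • s by rw [op_add, add_smul],
      map_add, hm, hm', DirectSum.decompose_add]
    simp [add_smul]

/-- Let `G` be a group with neutral element `e`, `A` a `G`-graded ring, `x ∈ G`,
and `S`, `S'` simple `G`-graded right `A`-modules with `S_x ≠ 0` and `S'_x ≠ 0`.
Then `S ≅ S'` as graded modules if and only if `S_x ≅ S'_x` as right
`A_e`-modules.

A graded isomorphism is a bijective additive, right `A`-linear, degree
preserving map `S → S'`; an `A_e`-isomorphism of the components is a bijection
`S_x → S'_x` which is additive and `A_e`-equivariant (encoded via a function on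
the ambient modules). -/
theorem stmt19 {G : Type*} [Group G] [DecidableEq G] {A : Type*} [Ring A]
    (𝒜 : G → AddSubgroup A) [DirectSum.Decomposition 𝒜]
    (hone : (1 : A) ∈ 𝒜 1)
    (hmul : ∀ {x y : G} {a b : A}, a ∈ 𝒜 x → b ∈ 𝒜 y → a * b ∈ 𝒜 (x * y))
    {S S' : Type*} [AddCommGroup S] [Module Aᵐᵒᵖ S] [AddCommGroup S'] [Module Aᵐᵒᵖ S']
    (𝒮 : G → AddSubgroup S) [DirectSum.Decomposition 𝒮]
    (𝒮' : G → AddSubgroup S') [DirectSum.Decomposition 𝒮']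
    (hcompat : ∀ (y z : G) (s : S) (a : A), s ∈ 𝒮 y → a ∈ 𝒜 z →
      op a • s ∈ 𝒮 (y * z))
    (hcompat' : ∀ (y z : G) (s : S') (a : A), s ∈ 𝒮' y → a ∈ 𝒜 z →
      op a • s ∈ 𝒮' (y * z))
    (hnz : ∃ s : S, s ≠ 0) (hnz' : ∃ s : S', s ≠ 0)
    (hsimple : ∀ N : Submodule Aᵐᵒᵖ S,
      (∀ s ∈ N, ∀ y : G, (DirectSum.decompose 𝒮 s y : S) ∈ N) → N = ⊥ ∨ N = ⊤)
    (hsimple' : ∀ N : Submodule Aᵐᵒᵖ S',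
      (∀ s ∈ N, ∀ y : G, (DirectSum.decompose 𝒮' s y : S') ∈ N) → N = ⊥ ∨ N = ⊤)
    (x : G) (hx : 𝒮 x ≠ ⊥) (hx' : 𝒮' x ≠ ⊥) :
    (∃ f : S → S', Function.Bijective f ∧
        (∀ s t : S, f (s + t) = f s + f t) ∧
        (∀ (a : A) (s : S), f (op a • s) = op a • f s) ∧
        (∀ y : G, ∀ s ∈ 𝒮 y, f s ∈ 𝒮' y)) ↔
    (∃ e : S → S', Set.MapsTo e (𝒮 x) (𝒮' x) ∧
        Set.InjOn e (𝒮 x) ∧ Set.SurjOn e (𝒮 x) (𝒮' x) ∧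
        (∀ s ∈ 𝒮 x, ∀ t ∈ 𝒮 x, e (s + t) = e s + e t) ∧
        (∀ s ∈ 𝒮 x, ∀ a ∈ 𝒜 1, e (op a • s) = op a • e s)) := by
  classical
  constructor
  · -- forward direction
    rintro ⟨f, ⟨finj, fsurj⟩, fadd, fsmul, fdeg⟩
    have hf0 : f 0 = 0 := by
      have h := fadd 0 0
      rw [add_zero] at h
      exact left_eq_add.mp h
    have fHom : ∃ F : S →+ S', ∀ s, F s = f s := ⟨AddMonoidHom.mk' f fadd, fun _ => rfl⟩
    obtain ⟨F, hF⟩ := fHom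
    refine ⟨f, fun s hs => fdeg x s hs, fun a _ b _ hab => finj hab, ?_, fun s _ t _ => fadd s t,
      fun s _ a _ => fsmul a s⟩
    -- SurjOn
    intro t ht
    obtain ⟨s, rfl⟩ := fsurj t
    have ht' : f s ∈ 𝒮' x := ht
    refine ⟨s, ?_, rfl⟩
    -- show s ∈ 𝒮 x
    have hs_sum := DirectSum.sum_support_decompose 𝒮 s
    have hcomp : ∀ y : G, y ≠ x → (DirectSum.decompose 𝒮 s y : S) = 0 := by
      intro y hyx
      by_cases hy : y ∈ (DirectSum.decompose 𝒮 s).support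
      · -- compute decompose (f s) y
        have h1 : dAux 𝒮' y (f s) = 0 := by
          rw [dAux_apply, DirectSum.decompose_of_mem_ne 𝒮' ht' (Ne.symm hyx)]
        have h2 : dAux 𝒮' y (f s) = f (DirectSum.decompose 𝒮 s y : S) := by
          conv_lhs => rw [← hs_sum]
          rw [show f (∑ i ∈ (DirectSum.decompose 𝒮 s).support,
              ((DirectSum.decompose 𝒮 s i : S))) = F (∑ i ∈ (DirectSum.decompose 𝒮 s).support,
              ((DirectSum.decompose 𝒮 s i : S))) from (hF _).symm, map_sum, map_sum]
          rw [Finset.sum_eq_single_of_mem y hy]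
          · rw [hF, dAux_apply,
              DirectSum.decompose_of_mem_same 𝒮' (fdeg y _ (SetLike.coe_mem _))]
          · intro z _ hzy
            rw [hF, dAux_apply,
              DirectSum.decompose_of_mem_ne 𝒮' (fdeg z _ (SetLike.coe_mem _)) hzy]
        have h3 : f (DirectSum.decompose 𝒮 s y : S) = f 0 := by rw [h2] at h1; rw [h1, hf0]
        exact finj h3
      · rw [DFinsupp.notMem_support_iff.mp hy]; rfl
    have hmem : (∑ i ∈ (DirectSum.decompose 𝒮 s).support, ((DirectSum.decompose 𝒮 s i : S)))
        ∈ 𝒮 x := by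
      refine AddSubgroup.sum_mem _ ?_
      intro y _
      by_cases hyx : y = x
      · subst hyx; exact SetLike.coe_mem _
      · rw [hcomp y hyx]; exact zero_mem _
    exact hs_sum ▸ hmem
  · -- backward direction
    rintro ⟨e, he_maps, he_inj, he_surj, he_add, he_smul⟩
    have he0 : e 0 = 0 := by
      have h := he_add 0 (zero_mem _) 0 (zero_mem _)
      rw [add_zero] at h
      exact left_eq_add.mp h
    set Gr : Set (S × S') := {p | ∃ s, s ∈ 𝒮 x ∧ p = (s, e s)} with hGrdef
    set W : Submodule Aᵐᵒᵖ (S × S') := Submodule.span Aᵐᵒᵖ Gr with hWdef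
    -- components of elements of W
    have hrep : ∀ p ∈ W, ∀ y : G,
        ∃ n : ℕ, ∃ v : Fin n → S, ∃ b : Fin n → A,
          (∀ i, v i ∈ 𝒮 x) ∧ (∀ i, b i ∈ 𝒜 (x⁻¹ * y)) ∧
          dAux 𝒮 y p.1 = ∑ i, op (b i) • v i ∧
          dAux 𝒮' y p.2 = ∑ i, op (b i) • e (v i) := by
      intro p hp y
      obtain ⟨n, c, g, hsum⟩ := Submodule.mem_span_set'.mp hp
      have hg : ∀ i, ((g i : S × S').1 ∈ 𝒮 x) ∧ (g i : S × S').2 = e (g i : S × S').1 := by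
        intro i
        obtain ⟨s, hs, hgs⟩ := (g i).2
        rw [hgs]
        exact ⟨hs, rfl⟩
      refine ⟨n, fun i => (g i : S × S').1,
        fun i => (DirectSum.decompose 𝒜 ((c i).unop) (x⁻¹ * y) : A),
        fun i => (hg i).1, fun i => SetLike.coe_mem _, ?_, ?_⟩
      · rw [← hsum, Prod.fst_sum, map_sum]
        refine Finset.sum_congr rfl fun i _ => ?_
        rw [Prod.smul_fst, show c i • (g i : S × S').1 = op ((c i).unop) • (g i : S × S').1 by
          rw [op_unop]]
        exact aux_decompose_smul 𝒜 𝒮 hcompat (hg i).1 ((c i).unop) y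
      · rw [← hsum, Prod.snd_sum, map_sum]
        refine Finset.sum_congr rfl fun i _ => ?_
        rw [Prod.smul_snd, show c i • (g i : S × S').2 = op ((c i).unop) • (g i : S × S').2 by
          rw [op_unop], (hg i).2]
        exact aux_decompose_smul 𝒜 𝒮' hcompat' (he_maps (hg i).1) ((c i).unop) y
    have hWgraded : ∀ p ∈ W, ∀ y : G,
        ((dAux 𝒮 y p.1, dAux 𝒮' y p.2) : S × S') ∈ W := by
      intro p hp y
      obtain ⟨n, v, b, hv, hb, h1, h2⟩ := hrep p hp y
      rw [h1, h2]
      have : ((∑ i, op (b i) • v i : S), (∑ i, op (b i) • e (v i) : S')) =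
          ∑ i, (op (b i) : Aᵐᵒᵖ) • ((v i, e (v i)) : S × S') := by
        refine Prod.ext ?_ ?_
        · simp [Prod.fst_sum]
        · simp [Prod.snd_sum]
      rw [this]
      exact Submodule.sum_mem _ fun i _ => Submodule.smul_mem _ _
        (Submodule.subset_span ⟨v i, hv i, rfl⟩)
    have hWx : ∀ p ∈ W, ∃ u, u ∈ 𝒮 x ∧
        dAux 𝒮 x p.1 = u ∧ dAux 𝒮' x p.2 = e u := by
      intro p hp
      obtain ⟨n, v, b, hv, hb, h1, h2⟩ := hrep p hp x
      rw [inv_mul_cancel] at hb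
      -- pair the sums: show the pair is a graph element
      have key : ∀ (m : ℕ) (vv : Fin m → S) (bb : Fin m → A), (∀ i, vv i ∈ 𝒮 x) →
          (∀ i, bb i ∈ 𝒜 1) →
          ∃ u, u ∈ 𝒮 x ∧ (∑ i, op (bb i) • vv i) = u ∧
            (∑ i, op (bb i) • e (vv i)) = e u := by
        intro m
        induction m with
        | zero => exact fun vv bb _ _ => ⟨0, zero_mem _, by simp, by simp [he0]⟩
        | succ k ih =>
          intro vv bb hvv hbb
          obtain ⟨u, hu, hu1, hu2⟩ := ih (fun i => vv i.succ) (fun i => bb i.succ)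
            (fun i => hvv _) (fun i => hbb _)
          have ht0 : op (bb 0) • vv 0 ∈ 𝒮 x := by
            have := hcompat x 1 (vv 0) (bb 0) (hvv 0) (hbb 0)
            rwa [mul_one] at this
          refine ⟨op (bb 0) • vv 0 + u, add_mem ht0 hu, ?_, ?_⟩
          · rw [Fin.sum_univ_succ, hu1]
          · rw [Fin.sum_univ_succ, hu2,
              he_add _ ht0 _ hu, he_smul (vv 0) (hvv 0) (bb 0) (hbb 0)]
      obtain ⟨u, hu, hu1, hu2⟩ := key n v b hv hb
      exact ⟨u, hu, by rw [h1, hu1], by rw [h2, hu2]⟩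
    -- nonzero homogeneous elements
    have hxS : ∃ u, u ∈ 𝒮 x ∧ u ≠ 0 := by
      by_contra h
      push_neg at h
      exact hx ((AddSubgroup.eq_bot_iff_forall _).mpr h)
    have hxS' : ∃ t, t ∈ 𝒮' x ∧ t ≠ 0 := by
      by_contra h
      push_neg at h
      exact hx' ((AddSubgroup.eq_bot_iff_forall _).mpr h)
    -- the kernels are trivial
    have hN' : Submodule.comap (LinearMap.inr Aᵐᵒᵖ S S') W = ⊥ := by
      have hgrad : ∀ s' ∈ Submodule.comap (LinearMap.inr Aᵐᵒᵖ S S') W, ∀ y : G,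
          (DirectSum.decompose 𝒮' s' y : S') ∈ Submodule.comap (LinearMap.inr Aᵐᵒᵖ S S') W := by
        intro s' hs' y
        have := hWgraded _ hs' y
        rw [show ((LinearMap.inr Aᵐᵒᵖ S S') s').1 = 0 from rfl, map_zero] at this
        exact this
      rcases hsimple' (Submodule.comap (LinearMap.inr Aᵐᵒᵖ S S') W) hgrad with h | h
      · exact h
      · exfalso
        obtain ⟨t, ht, htne⟩ := hxS'
        have h0t : ((0 : S), t) ∈ W := by
          have : t ∈ Submodule.comap (LinearMap.inr Aᵐᵒᵖ S S') W := by rw [h]; trivial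
          exact this
        obtain ⟨u, hu, hu1, hu2⟩ := hWx (0, t) h0t
        rw [show ((0,t) : S × S').1 = 0 from rfl, map_zero] at hu1
        rw [show ((0,t) : S × S').2 = t from rfl, dAux_apply,
          DirectSum.decompose_of_mem_same 𝒮' ht] at hu2
        rw [← hu1, he0] at hu2
        exact htne hu2
    have hN : Submodule.comap (LinearMap.inl Aᵐᵒᵖ S S') W = ⊥ := by
      have hgrad : ∀ s ∈ Submodule.comap (LinearMap.inl Aᵐᵒᵖ S S') W, ∀ y : G,
          (DirectSum.decompose 𝒮 s y : S) ∈ Submodule.comap (LinearMap.inl Aᵐᵒᵖ S S') W := by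
        intro s hs y
        have := hWgraded _ hs y
        rw [show ((LinearMap.inl Aᵐᵒᵖ S S') s).2 = 0 from rfl, map_zero] at this
        exact this
      rcases hsimple (Submodule.comap (LinearMap.inl Aᵐᵒᵖ S S') W) hgrad with h | h
      · exact h
      · exfalso
        obtain ⟨u, hu, hune⟩ := hxS
        have h0u : ((u, (0 : S')) : S × S') ∈ W := by
          have : u ∈ Submodule.comap (LinearMap.inl Aᵐᵒᵖ S S') W := by rw [h]; trivial
          exact this
        obtain ⟨v, hv, hv1, hv2⟩ := hWx (u, 0) h0u
        rw [show ((u, (0:S')) : S × S').1 = u from rfl, dAux_apply,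
          DirectSum.decompose_of_mem_same 𝒮 hu] at hv1
        rw [show ((u, (0:S')) : S × S').2 = 0 from rfl, map_zero] at hv2
        have : e v = e 0 := by rw [← hv2, he0]
        have hv0 : v = 0 := he_inj hv (zero_mem _) this
        rw [hv0] at hv1
        exact hune hv1
    -- uniqueness lemmas
    have hU2 : ∀ p ∈ W, ∀ q ∈ W, p.1 = q.1 → p.2 = q.2 := by
      intro p hp q hq h1
      have hsub : q - p ∈ W := sub_mem hq hp
      have heq : q - p = ((LinearMap.inr Aᵐᵒᵖ S S') (q.2 - p.2)) := by
        ext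
        · show q.1 - p.1 = 0
          rw [h1, sub_self]
        · rfl
      rw [heq] at hsub
      have : q.2 - p.2 ∈ Submodule.comap (LinearMap.inr Aᵐᵒᵖ S S') W := hsub
      rw [hN'] at this
      have := Submodule.mem_bot _ |>.mp this
      rw [sub_eq_zero] at this
      exact this.symm
    have hU1 : ∀ p ∈ W, ∀ q ∈ W, p.2 = q.2 → p.1 = q.1 := by
      intro p hp q hq h2
      have hsub : q - p ∈ W := sub_mem hq hp
      have heq : q - p = ((LinearMap.inl Aᵐᵒᵖ S S') (q.1 - p.1)) := by
        ext
        · rfl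
        · show q.2 - p.2 = 0
          rw [h2, sub_self]
      rw [heq] at hsub
      have : q.1 - p.1 ∈ Submodule.comap (LinearMap.inl Aᵐᵒᵖ S S') W := hsub
      rw [hN] at this
      have := Submodule.mem_bot _ |>.mp this
      rw [sub_eq_zero] at this
      exact this.symm
    -- surjectivity of the two projections
    have hS1 : ∀ s : S, ∃ p, p ∈ W ∧ (p : S × S').1 = s := by
      have hgrad : ∀ s ∈ Submodule.map (LinearMap.fst Aᵐᵒᵖ S S') W, ∀ y : G,
          (DirectSum.decompose 𝒮 s y : S) ∈ Submodule.map (LinearMap.fst Aᵐᵒᵖ S S') W := by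
        intro s hs y
        obtain ⟨p, hp, hps⟩ := hs
        refine ⟨(dAux 𝒮 y p.1, dAux 𝒮' y p.2), hWgraded p hp y, ?_⟩
        show dAux 𝒮 y p.1 = _
        rw [show (LinearMap.fst Aᵐᵒᵖ S S') p = p.1 from rfl] at hps
        rw [hps, dAux_apply]
      rcases hsimple (Submodule.map (LinearMap.fst Aᵐᵒᵖ S S') W) hgrad with h | h
      · exfalso
        obtain ⟨u, hu, hune⟩ := hxS
        have : u ∈ Submodule.map (LinearMap.fst Aᵐᵒᵖ S S') W :=
          ⟨(u, e u), Submodule.subset_span ⟨u, hu, rfl⟩, rfl⟩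
        rw [h] at this
        exact hune (Submodule.mem_bot _ |>.mp this)
      · intro s
        have : s ∈ Submodule.map (LinearMap.fst Aᵐᵒᵖ S S') W := by rw [h]; trivial
        obtain ⟨p, hp, hps⟩ := this
        exact ⟨p, hp, hps⟩
    have hS2 : ∀ t : S', ∃ p, p ∈ W ∧ (p : S × S').2 = t := by
      have hgrad : ∀ t ∈ Submodule.map (LinearMap.snd Aᵐᵒᵖ S S') W, ∀ y : G,
          (DirectSum.decompose 𝒮' t y : S') ∈ Submodule.map (LinearMap.snd Aᵐᵒᵖ S S') W := by
        intro t ht y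
        obtain ⟨p, hp, hps⟩ := ht
        refine ⟨(dAux 𝒮 y p.1, dAux 𝒮' y p.2), hWgraded p hp y, ?_⟩
        show dAux 𝒮' y p.2 = _
        rw [show (LinearMap.snd Aᵐᵒᵖ S S') p = p.2 from rfl] at hps
        rw [hps, dAux_apply]
      rcases hsimple' (Submodule.map (LinearMap.snd Aᵐᵒᵖ S S') W) hgrad with h | h
      · exfalso
        obtain ⟨t, ht, htne⟩ := hxS'
        obtain ⟨u, hu, hut⟩ := he_surj ht
        have : t ∈ Submodule.map (LinearMap.snd Aᵐᵒᵖ S S') W :=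
          ⟨(u, e u), Submodule.subset_span ⟨u, hu, rfl⟩, hut⟩
        rw [h] at this
        exact htne (Submodule.mem_bot _ |>.mp this)
      · intro t
        have : t ∈ Submodule.map (LinearMap.snd Aᵐᵒᵖ S S') W := by rw [h]; trivial
        obtain ⟨p, hp, hps⟩ := this
        exact ⟨p, hp, hps⟩
    -- construct f
    choose P hPW hP1 using hS1
    have hkey : ∀ p ∈ W, (P (p : S × S').1).2 = p.2 := by
      intro p hp
      exact hU2 _ (hPW p.1) p hp (hP1 p.1)
    refine ⟨fun s => (P s).2, ⟨?_, ?_⟩, ?_, ?_, ?_⟩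
    · -- injective
      intro s t hst
      have := hU1 _ (hPW s) _ (hPW t) hst
      rw [hP1, hP1] at this
      exact this
    · -- surjective
      intro t
      obtain ⟨p, hp, hpt⟩ := hS2 t
      exact ⟨p.1, by show (P p.1).2 = t; rw [hkey p hp, hpt]⟩
    · -- additive
      intro s t
      have hmem : P s + P t ∈ W := add_mem (hPW s) (hPW t)
      have h1 : (P s + P t).1 = s + t := by
        show (P s).1 + (P t).1 = s + t
        rw [hP1, hP1]
      have h2 := hkey (P s + P t) hmem
      rw [h1] at h2
      exact h2
    · -- linear
      intro a s
      have hmem : (op a : Aᵐᵒᵖ) • P s ∈ W := Submodule.smul_mem _ _ (hPW s)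
      have h1 : ((op a : Aᵐᵒᵖ) • P s).1 = op a • s := by
        show op a • (P s).1 = _
        rw [hP1]
      have h2 := hkey _ hmem
      rw [h1] at h2
      exact h2
    · -- degree preserving
      intro y s hs
      have hmem := hWgraded (P s) (hPW s) y
      have h1 : (dAux 𝒮 y (P s).1 : S) = s := by
        rw [hP1, dAux_apply, DirectSum.decompose_of_mem_same 𝒮 hs]
      have h2 := hkey _ hmem
      rw [show ((dAux 𝒮 y (P s).1, dAux 𝒮' y (P s).2) : S × S').1
        = dAux 𝒮 y (P s).1 from rfl, h1] at h2
      show (P s).2 ∈ 𝒮' y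
      rw [h2]
      exact SetLike.coe_mem _
end
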